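/- Let f : [ε,∞) → ℝ≥0 be Lipschitz continuous and let m : [0,T] → [ε,∞) be non-increasing with m(T) ≥ ε. Then there exists a unique function w : [0,T] → [ε,∞) satisfying the integral equation w(t) = ∫_t^T f(w(s)) ds + m(t) for all t ∈ [0,T]. -/

import Mathlib

open Set MeasureTheory intervalIntegral

lemma aux_int_pow (T a : ℝ) (n : ℕ) :
    (∫ s in a..T, (T - s) ^ n) = (T - a) ^ (n + 1) / (n + 1) := by
  rw [intervalIntegral.integral_comp_sub_left (fun x => x ^ n) T]
  simp [integral_pow]

set_option maxHeartbeats 4000000 in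
theorem stmt_5 (T ε : ℝ) (hT : 0 < T) (hε : 0 < ε)
    (f : ℝ → ℝ) (L : NNReal)
    (hf : LipschitzOnWith L f (Set.Ici ε))
    (hfnn : ∀ x ∈ Set.Ici ε, 0 ≤ f x)
    (m : ℝ → ℝ)
    (hm : AntitoneOn m (Set.Icc 0 T))
    (hmε : ∀ t ∈ Set.Icc (0:ℝ) T, ε ≤ m t) :
    ∃ w : ℝ → ℝ,
      (∀ t ∈ Set.Icc (0:ℝ) T, ε ≤ w t) ∧
      (∀ t ∈ Set.Icc (0:ℝ) T, w t = (∫ s in t..T, f (w s)) + m t) ∧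
      ∀ w' : ℝ → ℝ,
        (∀ t ∈ Set.Icc (0:ℝ) T, ε ≤ w' t) →
        (∀ t ∈ Set.Icc (0:ℝ) T, w' t = (∫ s in t..T, f (w' s)) + m t) →
        Set.EqOn w w' (Set.Icc 0 T) := by
  -- clamp function
  set c : ℝ → ℝ := fun t => max 0 (min t T) with hc_def
  have hc_mem : ∀ t, c t ∈ Icc 0 T := fun t =>
    ⟨le_max_left _ _, max_le (hT.le) (min_le_right _ _)⟩
  have hc_eq : ∀ t ∈ Icc 0 T, c t = t := by
    intro t ht
    simp only [hc_def]
    rw [min_eq_left ht.2, max_eq_right ht.1]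
  have hc_cont : Continuous c := continuous_const.max (continuous_id.min continuous_const)
  -- extended f
  set g : ℝ → ℝ := fun x => f (max x ε) with hg_def
  have hgL : LipschitzWith L g := by
    rw [lipschitzWith_iff_dist_le_mul]
    intro x y
    have h1 := (lipschitzOnWith_iff_dist_le_mul.mp hf) (max x ε) (Set.mem_Ici.2 (le_max_right x ε))
      (max y ε) (Set.mem_Ici.2 (le_max_right y ε))
    refine h1.trans ?_
    have : dist (max x ε) (max y ε) ≤ dist x y := by
      rw [Real.dist_eq, Real.dist_eq]
      exact abs_max_sub_max_le_abs x y ε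
    exact mul_le_mul_of_nonneg_left this L.coe_nonneg
  have hg0 : ∀ x, 0 ≤ g x := fun x => hfnn _ (Set.mem_Ici.2 (le_max_right x ε))
  have hgb : ∀ x, g x ≤ f ε + L * |x| := by
    intro x
    have h := hgL.dist_le_mul x 0
    rw [Real.dist_eq, Real.dist_eq, sub_zero] at h
    have hg00 : g 0 = f ε := by simp [hg_def, max_eq_right hε.le]
    have := abs_sub_abs_le_abs_sub (g x) (g 0)
    have h2 : g x - g 0 ≤ L * |x| := (le_abs_self _).trans h
    linarith [hg00 ▸ h2]
  -- extended m
  set M : ℝ → ℝ := fun t => m (c t) with hM_def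
  have hM_anti : Antitone M := by
    intro s t hst
    exact hm (hc_mem s) (hc_mem t) (max_le_max le_rfl (min_le_min hst le_rfl))
  have hM_meas : Measurable M := hM_anti.measurable
  have hM_lb : ∀ t, ε ≤ M t := fun t => hmε _ (hc_mem t)
  have hM_ub : ∀ t, M t ≤ m 0 := fun t => hm (left_mem_Icc.2 hT.le) (hc_mem t) (hc_mem t).1
  have hm0nn : 0 ≤ m 0 := hε.le.trans (hmε 0 (left_mem_Icc.2 hT.le))
  have hfεnn : 0 ≤ f ε := hfnn ε (Set.mem_Ici.2 le_rfl)
  -- generic integrability of bounded measurable functions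
  have hbm_int : ∀ (φ : ℝ → ℝ) (C : ℝ), Measurable φ → (∀ s, |φ s| ≤ C) →
      ∀ a b : ℝ, IntervalIntegrable φ volume a b := by
    intro φ C hmeas hC a b
    rw [intervalIntegrable_iff]
    apply Measure.integrableOn_of_bounded (measure_Ioc_lt_top).ne hmeas.aestronglyMeasurable
    exact ae_of_all _ fun s => (Real.norm_eq_abs _) ▸ hC s
  -- the Picard operator on bounded continuous functions
  have hint : ∀ (v : BoundedContinuousFunction ℝ ℝ) (a b : ℝ),
      IntervalIntegrable (fun s => g (v s + M s)) volume a b := by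
    intro v a b
    apply hbm_int _ (f ε + L * (‖v‖ + m 0))
    · exact hgL.continuous.measurable.comp ((map_continuous v).measurable.add hM_meas)
    · intro s
      have h1 : |v s + M s| ≤ ‖v‖ + m 0 := by
        have := abs_add_le (v s) (M s)
        have h2 : |v s| ≤ ‖v‖ := by
          rw [← Real.norm_eq_abs]; exact BoundedContinuousFunction.norm_coe_le_norm v s
        have h3 : |M s| ≤ m 0 := by
          rw [abs_of_nonneg (hε.le.trans (hM_lb s))]; exact hM_ub s
        linarith
      have h4 := hgb (v s + M s)
      rw [abs_of_nonneg (hg0 _)]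
      have : (L:ℝ) * |v s + M s| ≤ L * (‖v‖ + m 0) := mul_le_mul_of_nonneg_left h1 L.coe_nonneg
      linarith
  have hΨcont : ∀ v : BoundedContinuousFunction ℝ ℝ,
      Continuous fun t => ∫ s in c t..T, g (v s + M s) := by
    intro v
    have h1 : Continuous fun u => ∫ s in u..T, g (v s + M s) := by
      have h := (intervalIntegral.continuous_primitive (hint v) T).neg
      have heq : (fun u => ∫ s in u..T, g (v s + M s)) =
          fun u => -∫ s in T..u, g (v s + M s) := by
        funext u; rw [intervalIntegral.integral_symm]
      rw [heq]; exact h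
    exact h1.comp hc_cont
  have hΨbdd : ∀ v : BoundedContinuousFunction ℝ ℝ, ∀ t : ℝ,
      ‖∫ s in c t..T, g (v s + M s)‖ ≤ (f ε + L * (‖v‖ + m 0) + 1) * T := by
    intro v t
    have hC0 : (0:ℝ) ≤ f ε + L * (‖v‖ + m 0) + 1 := by
      positivity
    have h := intervalIntegral.norm_integral_le_of_norm_le_const
      (C := f ε + L * (‖v‖ + m 0) + 1) (f := fun s => g (v s + M s))
      (a := c t) (b := T) ?_
    · refine h.trans ?_
      have : |T - c t| ≤ T := by
        rw [abs_of_nonneg (by linarith [(hc_mem t).2])]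
        linarith [(hc_mem t).1]
      exact mul_le_mul_of_nonneg_left this hC0
    · intro x _
      rw [Real.norm_eq_abs, abs_of_nonneg (hg0 _)]
      have h4 := hgb (v x + M x)
      have h1 : |v x + M x| ≤ ‖v‖ + m 0 := by
        have := abs_add_le (v x) (M x)
        have h2 : |v x| ≤ ‖v‖ := by
          rw [← Real.norm_eq_abs]; exact BoundedContinuousFunction.norm_coe_le_norm v x
        have h3 : |M x| ≤ m 0 := by
          rw [abs_of_nonneg (hε.le.trans (hM_lb x))]; exact hM_ub x
        linarith
      have : (L:ℝ) * |v x + M x| ≤ L * (‖v‖ + m 0) := mul_le_mul_of_nonneg_left h1 L.coe_nonneg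
      linarith
  set Ψ : BoundedContinuousFunction ℝ ℝ → BoundedContinuousFunction ℝ ℝ := fun v =>
    BoundedContinuousFunction.ofNormedAddCommGroup
      (fun t => ∫ s in c t..T, g (v s + M s)) (hΨcont v) _ (hΨbdd v) with hΨ_def
  have hΨapp : ∀ (v : BoundedContinuousFunction ℝ ℝ) (t : ℝ),
      Ψ v t = ∫ s in c t..T, g (v s + M s) := fun v t => rfl
  -- Picard iterate estimate
  have key : ∀ (n : ℕ) (v u : BoundedContinuousFunction ℝ ℝ) (t : ℝ),
      |Ψ^[n] v t - Ψ^[n] u t| ≤ (L:ℝ)^n * (T - c t)^n / n.factorial * dist v u := by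
    intro n
    induction n with
    | zero =>
      intro v u t
      simp only [Function.iterate_zero_apply, pow_zero, Nat.factorial_zero, Nat.cast_one,
        mul_one, one_mul, div_one]
      rw [← Real.dist_eq]
      exact BoundedContinuousFunction.dist_coe_le_dist t
    | succ n ih =>
      intro v u t
      rw [Function.iterate_succ_apply', Function.iterate_succ_apply']
      set V := Ψ^[n] v with hV
      set U := Ψ^[n] u with hU
      rw [hΨapp, hΨapp, ← intervalIntegral.integral_sub (hint V _ _) (hint U _ _)]
      have hle : c t ≤ T := (hc_mem t).2
      have hfact : (0:ℝ) < n.factorial := by positivity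
      have hintsub := ((hint V (c t) T).sub (hint U (c t) T))
      calc |∫ s in c t..T, (g (V s + M s) - g (U s + M s))|
          ≤ ∫ s in c t..T, |g (V s + M s) - g (U s + M s)| := by
            rw [← Real.norm_eq_abs]
            have := intervalIntegral.norm_integral_le_integral_norm
              (f := fun s => g (V s + M s) - g (U s + M s)) (μ := volume) hle
            simpa [Real.norm_eq_abs] using this
        _ ≤ ∫ s in c t..T, (L:ℝ)^(n+1) * (T - s)^n / n.factorial * dist v u := by
            apply intervalIntegral.integral_mono_on hle hintsub.abs
            · exact (((continuous_const.mul
                ((continuous_const.sub continuous_id).pow n)).div_const _).mul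
                continuous_const).intervalIntegrable _ _
            · intro s hs
              have hsmem : s ∈ Icc 0 T := ⟨(hc_mem t).1.trans hs.1, hs.2⟩
              have hcs : c s = s := hc_eq s hsmem
              have h1 : |g (V s + M s) - g (U s + M s)| ≤ L * |V s - U s| := by
                have := hgL.dist_le_mul (V s + M s) (U s + M s)
                rw [Real.dist_eq, Real.dist_eq] at this
                simpa [add_sub_add_right_eq_sub] using this
              refine h1.trans ?_
              have h2 := ih v u s
              rw [hcs] at h2
              calc (L:ℝ) * |V s - U s| ≤ L * ((L:ℝ)^n * (T - s)^n / n.factorial * dist v u) :=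
                    mul_le_mul_of_nonneg_left h2 L.coe_nonneg
                _ = (L:ℝ)^(n+1) * (T - s)^n / n.factorial * dist v u := by ring
        _ = (L:ℝ)^(n+1) * (T - c t)^(n+1) / (n+1).factorial * dist v u := by
            have heq : (fun s => (L:ℝ)^(n+1) * (T - s)^n / n.factorial * dist v u) =
                fun s => ((L:ℝ)^(n+1) / n.factorial * dist v u) * (T - s)^n := by
              funext s; ring
            rw [heq, intervalIntegral.integral_const_mul, aux_int_pow]
            rw [Nat.factorial_succ]
            push_cast
            field_simp
  have keyD : ∀ (n : ℕ) (v u : BoundedContinuousFunction ℝ ℝ),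
      dist (Ψ^[n] v) (Ψ^[n] u) ≤ (L:ℝ)^n * T^n / n.factorial * dist v u := by
    intro n v u
    have hnn : (0:ℝ) ≤ (L:ℝ)^n * T^n / n.factorial * dist v u := by positivity
    apply BoundedContinuousFunction.dist_le hnn |>.2
    intro t
    rw [Real.dist_eq]
    refine (key n v u t).trans ?_
    have h0 : 0 ≤ T - c t := by linarith [(hc_mem t).2]
    have h1 : (T - c t)^n ≤ T^n := pow_le_pow_left₀ h0 (by linarith [(hc_mem t).1]) n
    apply mul_le_mul_of_nonneg_right _ dist_nonneg
    exact (div_le_div_iff_of_pos_right (by positivity)).2 (mul_le_mul_of_nonneg_left h1 (by positivity))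
  -- contraction of some iterate
  obtain ⟨n, hn⟩ : ∃ n : ℕ, (L:ℝ)^n * T^n / n.factorial < 1 := by
    have h := FloorSemiring.tendsto_pow_div_factorial_atTop ((L:ℝ) * T)
    have h2 := h.eventually (gt_mem_nhds one_pos)
    obtain ⟨n, hn⟩ := h2.exists
    exact ⟨n, by rwa [mul_pow] at hn⟩
  have hrnn : (0:ℝ) ≤ (L:ℝ)^n * T^n / n.factorial := by positivity
  set K : NNReal := Real.toNNReal ((L:ℝ)^n * T^n / n.factorial) with hK_def
  have hK1 : K < 1 := by
    rw [hK_def, ← Real.toNNReal_one]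
    exact (Real.toNNReal_lt_toNNReal_iff one_pos).2 hn
  have hKL : LipschitzWith K (Ψ^[n]) := by
    apply LipschitzWith.of_dist_le_mul
    intro v u
    rw [hK_def, Real.coe_toNNReal _ hrnn]
    exact keyD n v u
  have hC : ContractingWith K (Ψ^[n]) := ⟨hK1, hKL⟩
  set v₀ : BoundedContinuousFunction ℝ ℝ := hC.fixedPoint (Ψ^[n]) with hv₀_def
  have hfix : Ψ v₀ = v₀ := hC.isFixedPt_fixedPoint_iterate
  have huniq : ∀ v : BoundedContinuousFunction ℝ ℝ, Ψ v = v → v = v₀ := by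
    intro v hv
    have hiter : Ψ^[n] v = v := Function.IsFixedPt.iterate hv n
    have hd := keyD n v v₀
    rw [hiter, hC.fixedPoint_isFixedPt] at hd
    have hd0 : dist v v₀ = 0 := by nlinarith [dist_nonneg (x := v) (y := v₀)]
    exact eq_of_dist_eq_zero hd0
  -- the solution
  have hv₀eq : ∀ t, v₀ t = ∫ s in c t..T, g (v₀ s + M s) := by
    intro t
    conv_lhs => rw [← hfix]
    exact hΨapp v₀ t
  have hv₀nn : ∀ t, 0 ≤ v₀ t := by
    intro t
    rw [hv₀eq]
    exact intervalIntegral.integral_nonneg (hc_mem t).2 (fun u _ => hg0 _)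
  refine ⟨fun t => v₀ t + m t, ?_, ?_, ?_⟩
  · intro t ht
    have := hmε t ht
    have := hv₀nn t
    simp only []
    linarith
  · intro t ht
    have hct : c t = t := hc_eq t ht
    simp only []
    congr 1
    rw [hv₀eq, hct]
    apply intervalIntegral.integral_congr
    intro s hs
    rw [Set.uIcc_of_le ht.2] at hs
    have hs' : s ∈ Icc 0 T := ⟨ht.1.trans hs.1, hs.2⟩
    have hMs : M s = m s := by rw [hM_def]; simp only []; rw [hc_eq s hs']
    have hws : ε ≤ v₀ s + m s := by
      have := hmε s hs'; have := hv₀nn s; linarith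
    simp only [hg_def, hMs]
    rw [max_eq_left hws]
  · intro w' hw'ε hw'eq
    set H : ℝ → ℝ := fun s => g (w' s) with hH_def
    set J : ℝ → ℝ := fun t => ∫ s in t..T, H s with hJ_def
    have hHnn : ∀ s, 0 ≤ H s := fun s => hg0 _
    have hHf : ∀ t ∈ Icc (0:ℝ) T, (∫ s in t..T, f (w' s)) = J t := by
      intro t ht
      apply intervalIntegral.integral_congr
      intro s hs
      rw [Set.uIcc_of_le ht.2] at hs
      have hs' : s ∈ Icc 0 T := ⟨ht.1.trans hs.1, hs.2⟩
      simp only [hH_def, hg_def]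
      rw [max_eq_left (hw'ε s hs')]
    have hw'J : ∀ t ∈ Icc (0:ℝ) T, w' t = J t + m t := by
      intro t ht
      rw [hw'eq t ht, hHf t ht]
    have hJnn : ∀ t, t ≤ T → 0 ≤ J t := fun t ht =>
      intervalIntegral.integral_nonneg ht (fun u _ => hHnn u)
    set S : Set ℝ := {t | t ∈ Icc 0 T ∧ IntegrableOn H (Ioc t T) volume} with hS_def
    have hTS : T ∈ S := ⟨right_mem_Icc.2 hT.le, by simp [IntegrableOn]⟩
    have hSbdd : BddBelow S := ⟨0, fun t ht => ht.1.1⟩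
    have hSne : S.Nonempty := ⟨T, hTS⟩
    set q : ℝ := sInf S with hq_def
    have hq_mem : q ∈ Icc 0 T :=
      ⟨le_csInf hSne (fun t ht => ht.1.1), csInf_le hSbdd hTS⟩
    have hqS' : ∀ t, q < t → t ≤ T → IntegrableOn H (Ioc t T) volume := by
      intro t hqt htT
      obtain ⟨u, huS, hut⟩ := exists_lt_of_csInf_lt hSne hqt
      exact huS.2.mono_set (Ioc_subset_Ioc_left hut.le)
    have hnotS : ∀ t, 0 ≤ t → t < q → w' t = m t := by
      intro t h0 htq
      have htT : t ≤ T := htq.le.trans hq_mem.2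
      have hnot : ¬ IntegrableOn H (Ioc t T) volume := fun h =>
        absurd (csInf_le hSbdd ⟨⟨h0, htT⟩, h⟩) (not_le.2 htq)
      have hJ0 : J t = 0 := by
        apply intervalIntegral.integral_undef
        rwa [intervalIntegrable_iff_integrableOn_Ioc_of_le htT]
      have := hw'J t ⟨h0, htT⟩
      rw [hJ0, zero_add] at this
      exact this
    have hii : ∀ a b, q < a → a ≤ b → b ≤ T → IntervalIntegrable H volume a b := by
      intro a b hqa hab hbT
      rw [intervalIntegrable_iff_integrableOn_Ioc_of_le hab]
      exact (hqS' a hqa (hab.trans hbT)).mono_set (Ioc_subset_Ioc_right hbT)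
    have hJanti : ∀ s t, q < s → s ≤ t → t ≤ T → J t ≤ J s := by
      intro s t hqs hst htT
      have i1 := hii s t hqs hst htT
      have i2 := hii t T (hqs.trans_le hst) htT le_rfl
      have hsplit := intervalIntegral.integral_add_adjacent_intervals i1 i2
      have h0 : 0 ≤ ∫ u in s..t, H u := intervalIntegral.integral_nonneg hst (fun u _ => hHnn u)
      simp only [hJ_def]
      rw [← hsplit]
      linarith
    -- bound H by J on (q, T]
    set C1 : ℝ := f ε + L * m 0 with hC1_def
    have hC1nn : 0 ≤ C1 := by positivity
    have hHJbd : ∀ s, s ∈ Icc (0:ℝ) T → q < s → H s ≤ C1 + L * J s := by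
      intro s hs hqs
      have hws : w' s = J s + m s := hw'J s hs
      have h1 : |w' s| = J s + m s := by
        rw [hws, abs_of_nonneg]
        have := hmε s hs; have := hJnn s hs.2; linarith
      have h2 := hgb (w' s)
      rw [h1] at h2
      have h3 : m s ≤ m 0 := hm (left_mem_Icc.2 hT.le) hs hs.1
      have h4 : (L:ℝ) * (J s + m s) ≤ L * (J s + m 0) :=
        mul_le_mul_of_nonneg_left (by linarith) L.coe_nonneg
      simp only [hH_def, hC1_def] at *
      have h5 : (L:ℝ) * (J s + m 0) = L * J s + L * m 0 := by ring
      linarith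
    -- step-wise Gronwall bound
    set δ : ℝ := 1 / (2 * ((L:ℝ) + 1)) with hδ_def
    have hδpos : 0 < δ := by positivity
    have hLδ : (L:ℝ) * δ ≤ 1/2 := by
      rw [hδ_def, mul_one_div, div_le_div_iff₀ (by positivity) two_pos]
      have := L.coe_nonneg
      nlinarith
    set B : ℕ → ℝ := fun k => (2^(k+1) - 2) * (C1 * δ) with hB_def
    have hBstep : ∀ k, B (k+1) = 2 * (C1 * δ + B k) := by
      intro k
      simp only [hB_def]
      ring
    have hJbd : ∀ k : ℕ, ∀ t, q < t → t ≤ T → T - t ≤ k * δ → J t ≤ B k := by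
      intro k
      induction k with
      | zero =>
        intro t h1 h2 h3
        simp only [Nat.cast_zero, zero_mul] at h3
        have : t = T := le_antisymm h2 (by linarith)
        subst this
        simp [hJ_def, hB_def, intervalIntegral.integral_same]
      | succ k ih =>
        intro t hqt htT hTt
        set a : ℝ := max t (T - k * δ) with ha_def
        have hta : t ≤ a := le_max_left _ _
        have haT : a ≤ T := max_le htT (by nlinarith [Nat.cast_nonneg (α := ℝ) k])
        have hqa : q < a := lt_of_lt_of_le hqt hta
        have hat : a ≤ t + δ := by
          apply max_le (by linarith)
          push_cast at hTt
          linarith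
        have hJa : J a ≤ B k := by
          apply ih a hqa haT
          have := le_max_right t (T - k * δ)
          linarith
        have ita : IntervalIntegrable H volume t a := hii t a hqt hta haT
        have iaT : IntervalIntegrable H volume a T := hii a T hqa haT le_rfl
        have hsplit : J t = (∫ s in t..a, H s) + J a :=
          (intervalIntegral.integral_add_adjacent_intervals ita iaT).symm
        have hq0 : (0:ℝ) ≤ q := hq_mem.1
        have hJt : 0 ≤ J t := hJnn t htT
        have hmid : (∫ s in t..a, H s) ≤ (C1 + L * J t) * δ := by
          have hb : ∀ s ∈ Set.uIoc t a, ‖H s‖ ≤ C1 + L * J t := by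
            intro s hs
            rw [Set.uIoc_of_le hta] at hs
            have hs' : s ∈ Icc (0:ℝ) T := ⟨by linarith [hs.1], hs.2.trans haT⟩
            have hqs : q < s := lt_of_le_of_lt (le_of_lt hqt) hs.1
            have h5 := hHJbd s hs' hqs
            have h6 : J s ≤ J t := hJanti t s hqt hs.1.le (hs.2.trans haT)
            rw [Real.norm_eq_abs, abs_of_nonneg (hHnn s)]
            have h7 : (L:ℝ) * J s ≤ L * J t := mul_le_mul_of_nonneg_left h6 L.coe_nonneg
            linarith
          have h7 := intervalIntegral.norm_integral_le_of_norm_le_const hb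
          have h8 : |a - t| ≤ δ := by rw [abs_of_nonneg (by linarith)]; linarith
          have h9 : (0:ℝ) ≤ C1 + L * J t := by positivity
          calc (∫ s in t..a, H s) ≤ ‖∫ s in t..a, H s‖ := le_abs_self _
            _ ≤ (C1 + L * J t) * |a - t| := h7
            _ ≤ (C1 + L * J t) * δ := mul_le_mul_of_nonneg_left h8 h9
        have hhalf : (L:ℝ) * δ * J t ≤ J t / 2 := by
          have h := mul_le_mul_of_nonneg_right hLδ hJt
          calc (L:ℝ) * δ * J t ≤ 1/2 * J t := h
            _ = J t / 2 := by ring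
        have hexp : (C1 + L * J t) * δ = C1 * δ + L * δ * J t := by ring
        rw [hBstep]
        linarith
    obtain ⟨N, hN⟩ : ∃ N : ℕ, T ≤ N * δ := by
      refine ⟨⌈T / δ⌉₊, ?_⟩
      have := Nat.le_ceil (T / δ)
      rw [div_le_iff₀ hδpos] at this
      linarith [this]
    have hJbnd : ∀ t, q < t → t ≤ T → J t ≤ B N := by
      intro t h1 h2
      apply hJbd N t h1 h2
      have : (0:ℝ) ≤ t := hq_mem.1.trans h1.le
      linarith
    -- integrability of H on (q, T]
    have hJaem : AEMeasurable J (volume.restrict (Ioc q T)) := by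
      apply aemeasurable_restrict_of_antitoneOn measurableSet_Ioc
      intro s hs t ht hst
      exact hJanti s t hs.1 hst ht.2
    have hw'ae : w' =ᵐ[volume.restrict (Ioc q T)] (fun s => J s + M s) := by
      rw [Filter.EventuallyEq, ae_restrict_iff' measurableSet_Ioc]
      apply ae_of_all
      intro s hs
      have hs' : s ∈ Icc (0:ℝ) T := ⟨hq_mem.1.trans hs.1.le, hs.2⟩
      rw [hw'J s hs', hM_def]
      simp only []
      rw [hc_eq s hs']
    have hw'aem : AEMeasurable w' (volume.restrict (Ioc q T)) :=
      (hJaem.add hM_meas.aemeasurable).congr hw'ae.symm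
    have hHaem : AEMeasurable H (volume.restrict (Ioc q T)) :=
      hgL.continuous.measurable.comp_aemeasurable hw'aem
    have hHqT : IntegrableOn H (Ioc q T) volume := by
      refine ⟨hHaem.aestronglyMeasurable, ?_⟩
      apply HasFiniteIntegral.restrict_of_bounded (C := C1 + L * B N) measure_Ioc_lt_top
      rw [ae_restrict_iff' measurableSet_Ioc]
      apply ae_of_all
      intro s hs
      have hs' : s ∈ Icc (0:ℝ) T := ⟨hq_mem.1.trans hs.1.le, hs.2⟩
      rw [Real.norm_eq_abs, abs_of_nonneg (hHnn s)]
      have h5 := hHJbd s hs' hs.1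
      have h6 : (L:ℝ) * J s ≤ L * B N :=
        mul_le_mul_of_nonneg_left (hJbnd s hs.1 hs.2) L.coe_nonneg
      linarith
    -- integrability of H on [0, q)
    have hH0q : IntegrableOn H (Ico 0 q) volume := by
      have hgM : IntegrableOn (fun s => g (M s)) (Ico 0 q) volume := by
        apply Measure.integrableOn_of_bounded (measure_Ico_lt_top).ne
          (hgL.continuous.measurable.comp hM_meas).aestronglyMeasurable (M := f ε + L * m 0)
        apply ae_of_all
        intro s
        simp only [Function.comp_apply, Real.norm_eq_abs]
        rw [abs_of_nonneg (hg0 _)]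
        have h1 := hgb (M s)
        have h2 : (L:ℝ) * |M s| ≤ L * m 0 := by
          refine mul_le_mul_of_nonneg_left ?_ L.coe_nonneg
          rw [abs_of_nonneg (hε.le.trans (hM_lb s))]; exact hM_ub s
        linarith
      apply Integrable.congr hgM
      rw [Filter.EventuallyEq, ae_restrict_iff' measurableSet_Ico]
      apply ae_of_all
      intro s hs
      have h1 : w' s = m s := hnotS s hs.1 hs.2
      have hs' : s ∈ Icc (0:ℝ) T := ⟨hs.1, hs.2.le.trans hq_mem.2⟩
      simp only [hH_def]
      rw [h1, hM_def]
      simp only []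
      rw [hc_eq s hs']
    have hH0T : IntegrableOn H (Ioc 0 T) volume := by
      have hu : IntegrableOn H (Ico 0 q ∪ Ioc q T) volume := hH0q.union hHqT
      have hq' : IntegrableOn H {q} volume :=
        (integrableOn_singleton_iff).mpr (Or.inr (by simp))
      have hu2 : IntegrableOn H ((Ico 0 q ∪ Ioc q T) ∪ {q}) volume := hu.union hq'
      apply hu2.mono_set
      intro s hs
      rcases lt_trichotomy s q with h | h | h
      · exact Or.inl (Or.inl ⟨hs.1.le, h⟩)
      · exact Or.inr (by simp [h])
      · exact Or.inl (Or.inr ⟨h, hs.2⟩)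
    set H1 : ℝ → ℝ := (Ioc (0:ℝ) T).indicator H with hH1_def
    have hH1int : Integrable H1 volume := by
      rw [hH1_def, integrable_indicator_iff measurableSet_Ioc]
      exact hH0T
    have hH1eq : ∀ a ∈ Icc (0:ℝ) T, (∫ s in a..T, H1 s) = J a := by
      intro a ha
      simp only [hJ_def]
      rw [intervalIntegral.integral_of_le ha.2, intervalIntegral.integral_of_le ha.2,
        hH1_def, setIntegral_indicator measurableSet_Ioc]
      rw [Set.inter_eq_left.mpr (Ioc_subset_Ioc_left ha.1)]
    have hv'cont : Continuous fun t => ∫ s in (c t)..T, H1 s := by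
      have h1 : Continuous fun u => ∫ s in u..T, H1 s := by
        have h := (intervalIntegral.continuous_primitive
          (fun a b => hH1int.intervalIntegrable) T).neg
        have heq : (fun u => ∫ s in u..T, H1 s) = fun u => -∫ s in T..u, H1 s := by
          funext u; rw [intervalIntegral.integral_symm]
        rw [heq]; exact h
      exact h1.comp hc_cont
    have hv'bdd : ∀ t : ℝ, ‖∫ s in (c t)..T, H1 s‖ ≤ ∫ s, ‖H1 s‖ := by
      intro t
      have h1 := intervalIntegral.norm_integral_le_integral_norm
        (f := H1) (μ := volume) (a := c t) (b := T) (hc_mem t).2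
      refine h1.trans ?_
      rw [intervalIntegral.integral_of_le (hc_mem t).2]
      exact setIntegral_le_integral hH1int.norm (ae_of_all _ fun s => norm_nonneg _)
    set v' : BoundedContinuousFunction ℝ ℝ :=
      BoundedContinuousFunction.ofNormedAddCommGroup _ hv'cont _ hv'bdd with hv'_def
    have hv'app : ∀ t, v' t = ∫ s in (c t)..T, H1 s := fun t => rfl
    have hΨv' : Ψ v' = v' := by
      ext t
      rw [hΨapp, hv'app]
      rw [intervalIntegral.integral_of_le (hc_mem t).2,
        intervalIntegral.integral_of_le (hc_mem t).2]
      apply setIntegral_congr_fun measurableSet_Ioc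
      intro s hs
      have hs' : s ∈ Icc (0:ℝ) T := ⟨(hc_mem t).1.trans hs.1.le, hs.2⟩
      have hcs : c s = s := hc_eq s hs'
      have hv's : v' s = J s := by rw [hv'app, hcs, hH1eq s hs']
      have hMs : M s = m s := by rw [hM_def]; simp only []; rw [hc_eq s hs']
      have hws : w' s = J s + m s := hw'J s hs'
      have hH1s : H1 s = H s := by
        rw [hH1_def]
        have hsm : s ∈ Ioc (0:ℝ) T := ⟨lt_of_le_of_lt (hc_mem t).1 hs.1, hs.2⟩
        exact Set.indicator_of_mem hsm H
      show g (v' s + M s) = H1 s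
      rw [hv's, hMs, hH1s, ← hws, hH_def]
    have hv'v₀ : v' = v₀ := huniq v' hΨv'
    intro t ht
    have hct : c t = t := hc_eq t ht
    show v₀ t + m t = w' t
    rw [← hv'v₀, hv'app, hct, hH1eq t ht, ← hw'J t ht]
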